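/- Let X be a finite set, Θ ⊆ ℝ^m open, and θ ↦ p_θ a twice continuously differentiable family of strictly positive probability distributions on X. Let f : [0,∞) → ℝ be strictly convex and twice continuously differentiable with f(1) = 0 and f''(1) ≠ 0, and let F : (0,∞) → (0,∞) be twice continuously differentiable such that x ↦ F(p_θ(x)) is a strictly positive probability distribution on X for every θ ∈ Θ. Then for all i, j and all θ, −(∂/∂θ'_j)(∂/∂θ_i) D_f^{(F)}(p_θ, p_{θ'}) evaluated at θ' = θ equals ∑_{x∈X} F(p_θ(x)) · ∂_i log F(p_θ(x)) · ∂_j log F(p_θ(x)), i.e. the Eguchi metric of D_f^{(F)} is g^{(f,F)}_{ij}(θ) = E_{F(p_θ)}[∂_i log F(p_θ(X)) ∂_j log F(p_θ(X))]. -/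

import Mathlib

open scoped BigOperators Topology Matrix
open Real MeasureTheory

noncomputable section

/-- Expectation of `A` under the weight/distribution `p` on a finite set. -/
def expct {X : Type*} [Fintype X] (p A : X → ℝ) : ℝ := ∑ x, p x * A x

/-- Covariance of `A` and `B` under `p`. -/
def covf {X : Type*} [Fintype X] (p A B : X → ℝ) : ℝ :=
  (∑ x, p x * A x * B x) - (∑ x, p x * A x) * (∑ x, p x * B x)

/-- Variance of `A` under `p`: `E_p[(A - E_p A)^2]`. -/
def varE {X : Type*} [Fintype X] (p A : X → ℝ) : ℝ :=
  ∑ x, p x * (A x - expct p A) ^ 2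

/-- The α-escort distribution of `p`. -/
def escort {X : Type*} [Fintype X] (α : ℝ) (p : X → ℝ) : X → ℝ :=
  fun x => p x ^ α / ∑ y, p y ^ α

/-- Partial derivative in the `i`-th coordinate direction. -/
def pderiv {m : ℕ} (i : Fin m) (f : (Fin m → ℝ) → ℝ) (θ : Fin m → ℝ) : ℝ :=
  fderiv ℝ f θ (Pi.single i 1)

/-- Covariance matrix of a vector-valued map `A` under `p`. -/
def covMatrix {X : Type*} [Fintype X] {m : ℕ} (p : X → ℝ) (A : X → Fin m → ℝ) :
    Matrix (Fin m) (Fin m) ℝ :=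
  Matrix.of fun i j => covf p (fun x => A x i) (fun x => A x j)

/-- The α-information matrix `G^{(α)}(θ)`. -/
def Galpha {X : Type*} [Fintype X] {m : ℕ} (α : ℝ) (p : (Fin m → ℝ) → X → ℝ)
    (θ : Fin m → ℝ) : Matrix (Fin m) (Fin m) ℝ :=
  Matrix.of fun i j =>
    covf (escort α (p θ)) (fun x => pderiv i (fun t => Real.log (p t x)) θ)
      (fun x => pderiv j (fun t => Real.log (p t x)) θ)

/-- The I_α-divergence (relative α-entropy). -/
def Ialpha {X : Type*} [Fintype X] (α : ℝ) (p q : X → ℝ) : ℝ :=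
  (1 / (1 - α)) * Real.log (∑ x, p x * q x ^ (α - 1))
    + (1 / α) * Real.log (∑ x, q x ^ α)
    - (1 / (α * (1 - α))) * Real.log (∑ x, p x ^ α)

/-- Generalized KL-divergence between positive measures on a finite set. -/
def genKL {X : Type*} [Fintype X] (pt qt : X → ℝ) : ℝ :=
  ∑ x, pt x * Real.log (pt x / qt x) - ∑ x, pt x + ∑ x, qt x

/-- The Fisher information matrix `G^{(e)}(θ)`. -/
def GeMat {X : Type*} [Fintype X] {k : ℕ} (p : (Fin k → ℝ) → X → ℝ) (θ : Fin k → ℝ) :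
    Matrix (Fin k) (Fin k) ℝ :=
  Matrix.of fun i j =>
    ∑ x, p θ x * pderiv i (fun t => Real.log (p t x)) θ * pderiv j (fun t => Real.log (p t x)) θ

/-- The prior matrix `J^λ(θ)` with entries `∂_i log λ · ∂_j log λ`. -/
def Jmat {k : ℕ} (lam : (Fin k → ℝ) → ℝ) (θ : Fin k → ℝ) : Matrix (Fin k) (Fin k) ℝ :=
  Matrix.of fun i j =>
    pderiv i (fun t => Real.log (lam t)) θ * pderiv j (fun t => Real.log (lam t)) θ

/-- The generalized Fisher matrix `G^{(f,F)}(θ)` of the escort model. -/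
def GFF {X : Type*} [Fintype X] {k : ℕ} (F : ℝ → ℝ) (p : (Fin k → ℝ) → X → ℝ)
    (θ : Fin k → ℝ) : Matrix (Fin k) (Fin k) ℝ :=
  Matrix.of fun i j =>
    ∑ x, F (p θ x) * pderiv i (fun t => Real.log (F (p t x))) θ
      * pderiv j (fun t => Real.log (F (p t x))) θ

/-- The generalized f-divergence `D_f^{(F)}(p,q)`. -/
def genDiv {X : Type*} [Fintype X] (f F : ℝ → ℝ) (p q : X → ℝ) : ℝ :=
  (1 / deriv (deriv f) 1) * ∑ x, F (q x) * f (F (p x) / F (q x))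

/-- The Bayesian I_α-divergence between `λ·p` and `μ·q`. -/
def IalphaB {X : Type*} [Fintype X] (α lam mu : ℝ) (p q : X → ℝ) : ℝ :=
  lam * Ialpha α p q + lam * Real.log (lam / mu) - lam + mu

/-- The open-simplex parametrization of distributions on a set with `d+1` points. -/
def simplexFam (d : ℕ) (θ : Fin d → ℝ) : Fin (d + 1) → ℝ :=
  fun x => if h : (x : ℕ) < d then θ ⟨x, h⟩ else 1 - ∑ i, θ i

/-- the Eguchi metric of the generalized f-divergence `D_f^{(F)}`. -/
theorem eguchi_metric_genDiv {X : Type*} [Fintype X] {m : ℕ}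
    (Θ : Set (Fin m → ℝ)) (hΘ : IsOpen Θ)
    (p : (Fin m → ℝ) → X → ℝ)
    (hsmooth : ∀ x, ContDiffOn ℝ 2 (fun θ => p θ x) Θ)
    (hpos : ∀ θ ∈ Θ, ∀ x, 0 < p θ x)
    (hsum : ∀ θ ∈ Θ, ∑ x, p θ x = 1)
    (f : ℝ → ℝ) (hconv : StrictConvexOn ℝ (Set.Ici 0) f)
    (hf : ContDiffOn ℝ 2 f (Set.Ici 0))
    (hf1 : f 1 = 0) (hf'' : deriv (deriv f) 1 ≠ 0)
    (F : ℝ → ℝ) (hF : ContDiffOn ℝ 2 F (Set.Ioi 0))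
    (hFpos : ∀ θ ∈ Θ, ∀ x, 0 < F (p θ x))
    (hFsum : ∀ θ ∈ Θ, ∑ x, F (p θ x) = 1) :
    ∀ θ ∈ Θ, ∀ i j : Fin m,
      -(pderiv j (fun θ' => pderiv i (fun t => genDiv f F (p t) (p θ')) θ) θ)
        = ∑ x, F (p θ x) * pderiv i (fun t => Real.log (F (p t x))) θ
            * pderiv j (fun t => Real.log (F (p t x))) θ := by
  intro θ hθ i j
  classical
  have hΘn : Θ ∈ 𝓝 θ := hΘ.mem_nhds hθ
  -- derivative of t ↦ F (p t x)
  have hq : ∀ (x : X), ∀ t ∈ Θ, HasFDerivAt (fun s => F (p s x))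
      (deriv F (p t x) • fderiv ℝ (fun s => p s x) t) t := by
    intro x t ht
    have hpd : HasFDerivAt (fun s => p s x) (fderiv ℝ (fun s => p s x) t) t :=
      (((hsmooth x).differentiableOn (by norm_num)).differentiableAt
        (hΘ.mem_nhds ht)).hasFDerivAt
    have hdF : HasDerivAt F (deriv F (p t x)) (p t x) :=
      ((hF.contDiffAt (isOpen_Ioi.mem_nhds (Set.mem_Ioi.mpr (hpos t ht x)))).differentiableAt
        (by norm_num)).hasDerivAt
    exact hdF.comp_hasFDerivAt t hpd
  -- f is C² at positive points
  have hfc : ∀ r : ℝ, 0 < r → ContDiffAt ℝ 2 f r := fun r hr =>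
    hf.contDiffAt (mem_nhds_iff.mpr ⟨Set.Ioi 0, Set.Ioi_subset_Ici_self, isOpen_Ioi,
      Set.mem_Ioi.mpr hr⟩)
  -- second derivative of f at 1
  have hd2 : HasDerivAt (deriv f) (deriv (deriv f) 1) 1 := by
    obtain ⟨u, hu, hcu⟩ := (hfc 1 one_pos).contDiffOn le_rfl (by simp)
    obtain ⟨v, hvu, hv, hv1⟩ := mem_nhds_iff.mp hu
    have h2 : ContDiffOn ℝ 1 (deriv f) v :=
      (hcu.mono hvu).deriv_of_isOpen hv (by norm_num)
    exact ((h2.differentiableOn (by norm_num)).differentiableAt (hv.mem_nhds hv1)).hasDerivAt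
  -- Step A: the inner partial derivative, for θ' in Θ
  have stepA : ∀ θ' ∈ Θ, pderiv i (fun t => genDiv f F (p t) (p θ')) θ
      = (1 / deriv (deriv f) 1) * ∑ x, deriv f (F (p θ x) / F (p θ' x)) *
          ((deriv F (p θ x) • fderiv ℝ (fun s => p s x) θ) (Pi.single i 1)) := by
    intro θ' hθ'
    have hterm : ∀ x : X, HasFDerivAt (fun t => F (p θ' x) * f (F (p t x) / F (p θ' x)))
        (F (p θ' x) • (deriv f (F (p θ x) / F (p θ' x)) •
          ((F (p θ' x))⁻¹ • (deriv F (p θ x) • fderiv ℝ (fun s => p s x) θ)))) θ := by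
      intro x
      have hne' : F (p θ' x) ≠ 0 := ne_of_gt (hFpos θ' hθ' x)
      have hrpos : 0 < F (p θ x) / F (p θ' x) := div_pos (hFpos θ hθ x) (hFpos θ' hθ' x)
      have hdf : HasDerivAt f (deriv f (F (p θ x) / F (p θ' x))) (F (p θ x) / F (p θ' x)) :=
        ((hfc _ hrpos).differentiableAt (by norm_num)).hasDerivAt
      have hratio : HasFDerivAt (fun t => F (p t x) / F (p θ' x))
          ((F (p θ' x))⁻¹ • (deriv F (p θ x) • fderiv ℝ (fun s => p s x) θ)) θ := by
        simpa [div_eq_mul_inv, mul_comm] using (hq x θ hθ).mul_const (F (p θ' x))⁻¹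
      exact (hdf.comp_hasFDerivAt θ hratio).const_mul (F (p θ' x))
    have hmul := (HasFDerivAt.fun_sum (fun x (_ : x ∈ Finset.univ) => hterm x)).const_mul
      (1 / deriv (deriv f) 1)
    simp only [pderiv, genDiv]
    rw [hmul.fderiv]
    simp only [ContinuousLinearMap.smul_apply, ContinuousLinearMap.sum_apply, smul_eq_mul]
    congr 1
    refine Finset.sum_congr rfl fun x _ => ?_
    have hne' : F (p θ' x) ≠ 0 := ne_of_gt (hFpos θ' hθ' x)
    field_simp
  have hEq : (fun θ' => pderiv i (fun t => genDiv f F (p t) (p θ')) θ) =ᶠ[𝓝 θ]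
      (fun θ' => (1 / deriv (deriv f) 1) * ∑ x, deriv f (F (p θ x) / F (p θ' x)) *
          ((deriv F (p θ x) • fderiv ℝ (fun s => p s x) θ) (Pi.single i 1))) :=
    Filter.eventuallyEq_of_mem hΘn stepA
  -- Step B: differentiate the formula from Step A in θ' at θ
  have hBterm : ∀ x : X, HasFDerivAt
      (fun θ' => deriv f (F (p θ x) / F (p θ' x)) *
          ((deriv F (p θ x) • fderiv ℝ (fun s => p s x) θ) (Pi.single i 1)))
      (((deriv F (p θ x) • fderiv ℝ (fun s => p s x) θ) (Pi.single i 1)) •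
        ((deriv (deriv f) 1 * ((0 * F (p θ x) - F (p θ x) * 1) / F (p θ x) ^ 2)) •
          (deriv F (p θ x) • fderiv ℝ (fun s => p s x) θ))) θ := by
    intro x
    have hne : F (p θ x) ≠ 0 := ne_of_gt (hFpos θ hθ x)
    have hinv : HasDerivAt (fun y : ℝ => F (p θ x) / y)
        ((0 * F (p θ x) - F (p θ x) * 1) / F (p θ x) ^ 2) (F (p θ x)) :=
      (hasDerivAt_const _ _).div (hasDerivAt_id _) hne
    have hd2' : HasDerivAt (deriv f) (deriv (deriv f) 1) (F (p θ x) / F (p θ x)) := by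
      rw [div_self hne]; exact hd2
    have hcomp : HasDerivAt (fun y : ℝ => deriv f (F (p θ x) / y))
        (deriv (deriv f) 1 * ((0 * F (p θ x) - F (p θ x) * 1) / F (p θ x) ^ 2))
        (F (p θ x)) := hd2'.comp _ hinv
    exact (hcomp.comp_hasFDerivAt θ (hq x θ hθ)).mul_const _
  have hB := (HasFDerivAt.fun_sum (fun x (_ : x ∈ Finset.univ) => hBterm x)).const_mul
    (1 / deriv (deriv f) 1)
  have keyL : pderiv j (fun θ' => pderiv i (fun t => genDiv f F (p t) (p θ')) θ) θ
      = ((1 / deriv (deriv f) 1) • ∑ x,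
          (((deriv F (p θ x) • fderiv ℝ (fun s => p s x) θ) (Pi.single i 1)) •
            ((deriv (deriv f) 1 * ((0 * F (p θ x) - F (p θ x) * 1) / F (p θ x) ^ 2)) •
              (deriv F (p θ x) • fderiv ℝ (fun s => p s x) θ)))) (Pi.single j 1) := by
    rw [show pderiv j (fun θ' => pderiv i (fun t => genDiv f F (p t) (p θ')) θ) θ
        = fderiv ℝ (fun θ' => pderiv i (fun t => genDiv f F (p t) (p θ')) θ) θ
          (Pi.single j 1) from rfl, hEq.fderiv_eq, hB.fderiv]
  -- Step C: the partial derivatives of the logarithms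
  have hlog : ∀ (k : Fin m) (x : X), pderiv k (fun t => Real.log (F (p t x))) θ
      = (F (p θ x))⁻¹ *
          ((deriv F (p θ x) • fderiv ℝ (fun s => p s x) θ) (Pi.single k 1)) := by
    intro k x
    have h : HasFDerivAt (fun t => Real.log (F (p t x)))
        ((F (p θ x))⁻¹ • (deriv F (p θ x) • fderiv ℝ (fun s => p s x) θ)) θ := by
      have := HasDerivAt.comp_hasFDerivAt θ (Real.hasDerivAt_log (ne_of_gt (hFpos θ hθ x))) (hq x θ hθ)
      exact this
    rw [show pderiv k (fun t => Real.log (F (p t x))) θ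
        = fderiv ℝ (fun t => Real.log (F (p t x))) θ (Pi.single k 1) from rfl, h.fderiv]
    simp [smul_eq_mul]
  rw [keyL]
  simp only [hlog, ContinuousLinearMap.smul_apply, ContinuousLinearMap.sum_apply, smul_eq_mul]
  rw [Finset.mul_sum, ← Finset.sum_neg_distrib]
  refine Finset.sum_congr rfl fun x _ => ?_
  have hne : F (p θ x) ≠ 0 := ne_of_gt (hFpos θ hθ x)
  field_simp
  ring
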